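/- arXiv:1811.05558 — 2 statements merged into one kernel-verified Lean document; each statement's English description precedes it below -/
import Mathlib

section
/- For every m ≥ 1 and λ ∈ ℂ, the determinant of (L_m^T(λ))* · L_m^T(λ) equals 1 + |λ|² + |λ|⁴ + ... + |λ|^{2m}, where (·)* denotes conjugate transpose. In particular it is always strictly positive. -/
open Matrix

/-- The transposed Kronecker block `L_m^T(λ)`: the `(m+1) × m` matrix with `λ` on the
main diagonal and `1` on the subdiagonal. -/
def LmT (m : ℕ) (lam : ℂ) : Matrix (Fin (m + 1)) (Fin m) ℂ :=
  Matrix.of fun i j => if (i : ℕ) = (j : ℕ) then lam else if (i : ℕ) = (j : ℕ) + 1 then 1 else 0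

def Tm (m : ℕ) (lam : ℂ) : Matrix (Fin m) (Fin m) ℂ :=
  Matrix.of fun i j =>
    if (i : ℕ) = (j : ℕ) then 1 + (starRingEnd ℂ) lam * lam
    else if (i : ℕ) + 1 = (j : ℕ) then lam
    else if (i : ℕ) = (j : ℕ) + 1 then (starRingEnd ℂ) lam else 0

lemma mul_eq_Tm (m : ℕ) (lam : ℂ) : (LmT m lam)ᴴ * LmT m lam = Tm m lam := by
  ext i j
  rw [Matrix.mul_apply]
  have key : ∀ k : Fin (m+1), (LmT m lam)ᴴ i k * LmT m lam k j =
      (if k = i.castSucc then (starRingEnd ℂ) lam * LmT m lam i.castSucc j else 0) +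
      (if k = i.succ then LmT m lam i.succ j else 0) := by
    intro k
    by_cases h1 : (k : ℕ) = (i : ℕ)
    · have hk : k = i.castSucc := Fin.ext h1
      subst hk
      simp [LmT, conjTranspose_apply, Fin.ext_iff, h1]
    · by_cases h2 : (k : ℕ) = (i : ℕ) + 1
      · have hk : k = i.succ := Fin.ext h2
        subst hk
        simp [LmT, conjTranspose_apply, Fin.ext_iff, h2, (by omega : ¬ ((i:ℕ)+1 = (i:ℕ)))]
      · simp [LmT, conjTranspose_apply, Fin.ext_iff, h1, h2,
          (by omega : ¬ ((k:ℕ) = (i:ℕ))), (by omega : ¬ ((k:ℕ) = (i:ℕ)+1))]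
  rw [Finset.sum_congr rfl fun k _ => key k, Finset.sum_add_distrib,
    Finset.sum_ite_eq' Finset.univ i.castSucc, Finset.sum_ite_eq' Finset.univ i.succ]
  simp only [Finset.mem_univ, if_true]
  simp only [LmT, Tm, Matrix.of_apply, Fin.coe_castSucc, Fin.val_succ]
  by_cases hij : (i:ℕ) = (j:ℕ)
  · simp [hij, (by omega : ¬ ((j:ℕ)+1 = (j:ℕ)))]
    ring
  · by_cases hij1 : (i:ℕ)+1 = (j:ℕ)
    · simp [hij, hij1]
      intro h; exact absurd h (by omega)
    · by_cases hij2 : (i:ℕ) = (j:ℕ)+1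
      · simp [hij, hij1, hij2]
        rw [if_neg (by omega : ¬ ((j:ℕ)+1+1 = (j:ℕ))), if_neg (by omega : ¬ ((j:ℕ)+1+1 = (j:ℕ)))]
        simp
      · simp [hij, hij1, hij2]

lemma det_Tm_rec (m : ℕ) (lam : ℂ) :
    (Tm (m+2) lam).det = (1 + (starRingEnd ℂ) lam * lam) * (Tm (m+1) lam).det
      - ((starRingEnd ℂ) lam * lam) * (Tm m lam).det := by
  rw [Matrix.det_succ_row_zero, Fin.sum_univ_succ, Fin.sum_univ_succ]
  have hz : ∀ j : Fin m, Tm (m+2) lam 0 j.succ.succ = 0 := by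
    intro j
    simp [Tm, Fin.ext_iff]
  have hsum0 : ∀ j : Fin m,
      (-1 : ℂ) ^ ((j.succ.succ : Fin (m+2)) : ℕ) * Tm (m+2) lam 0 j.succ.succ *
        ((Tm (m+2) lam).submatrix Fin.succ (j.succ.succ).succAbove).det = 0 := by
    intro j; rw [hz]; ring
  rw [Finset.sum_congr rfl fun j _ => hsum0 j, Finset.sum_const_zero]
  have h00 : (Tm (m+2) lam).submatrix Fin.succ ((0 : Fin (m+2)).succAbove) = Tm (m+1) lam := by
    ext i k
    simp only [Matrix.submatrix_apply, Fin.zero_succAbove, Tm, Matrix.of_apply,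
      Fin.val_succ]
    by_cases h1 : (i:ℕ) = (k:ℕ) <;> by_cases h2 : (i:ℕ)+1 = (k:ℕ) <;>
      by_cases h3 : (i:ℕ) = (k:ℕ)+1 <;>
      simp_all
  have hB : ((Tm (m+2) lam).submatrix Fin.succ ((1 : Fin (m+2)).succAbove)).det =
      (starRingEnd ℂ) lam * (Tm m lam).det := by
    rw [Matrix.det_succ_column_zero, Fin.sum_univ_succ]
    have hz1 : ∀ i : Fin m,
        (Tm (m+2) lam).submatrix Fin.succ ((1 : Fin (m+2)).succAbove) i.succ 0 = 0 := by
      intro i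
      simp [Tm, Fin.succAbove, Fin.lt_def, Fin.ext_iff]
    have hsum1 : ∀ i : Fin m,
        (-1 : ℂ) ^ ((i.succ : Fin (m+1)) : ℕ) *
          (Tm (m+2) lam).submatrix Fin.succ ((1 : Fin (m+2)).succAbove) i.succ 0 *
          (((Tm (m+2) lam).submatrix Fin.succ ((1 : Fin (m+2)).succAbove)).submatrix
            (i.succ).succAbove Fin.succ).det = 0 := by
      intro i; rw [hz1]; ring
    rw [Finset.sum_congr rfl fun i _ => hsum1 i, Finset.sum_const_zero, add_zero]
    have he : (Tm (m+2) lam).submatrix Fin.succ ((1 : Fin (m+2)).succAbove) 0 0 =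
        (starRingEnd ℂ) lam := by
      simp [Tm, Fin.succAbove, Fin.lt_def]
    have hm : (((Tm (m+2) lam).submatrix Fin.succ ((1 : Fin (m+2)).succAbove)).submatrix
        ((0 : Fin (m+1)).succAbove) Fin.succ) = Tm m lam := by
      ext i k
      simp only [Matrix.submatrix_apply, Fin.zero_succAbove, Tm, Matrix.of_apply,
        Fin.val_succ, Fin.succAbove, Fin.lt_def]
      by_cases h1 : (i:ℕ) = (k:ℕ) <;> by_cases h2 : (i:ℕ)+1 = (k:ℕ) <;>
        by_cases h3 : (i:ℕ) = (k:ℕ)+1 <;>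
        simp_all
    rw [he, hm]
    simp
  have e0 : Tm (m+2) lam 0 0 = 1 + (starRingEnd ℂ) lam * lam := by simp [Tm]
  have e1 : Tm (m+2) lam 0 1 = lam := by simp [Tm]
  simp only [Fin.succ_zero_eq_one]
  rw [e0, e1, h00, hB]
  simp only [Fin.val_zero, Fin.val_one, pow_zero, pow_one]
  ring

lemma det_Tm (lam : ℂ) : ∀ m : ℕ,
    (Tm m lam).det = ∑ k ∈ Finset.range (m + 1), ((starRingEnd ℂ) lam * lam) ^ k := by
  set x := (starRingEnd ℂ) lam * lam with hx
  have key : ∀ m : ℕ,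
      (Tm m lam).det = ∑ k ∈ Finset.range (m + 1), x ^ k ∧
      (Tm (m+1) lam).det = ∑ k ∈ Finset.range (m + 2), x ^ k := by
    intro m
    induction m with
    | zero =>
      constructor
      · simp [Matrix.det_fin_zero]
      · rw [show (Tm 1 lam).det = Tm 1 lam 0 0 from Matrix.det_fin_one _]
        simp [Tm, Finset.sum_range_succ, hx]
    | succ n ih =>
      refine ⟨ih.2, ?_⟩
      rw [det_Tm_rec, ih.1, ih.2]
      rw [show n+1+2 = n+2+1 from rfl, Finset.sum_range_succ (fun k => x ^ k) (n+2),
        Finset.sum_range_succ (fun k => x ^ k) (n+1)]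
      ring
  exact fun m => (key m).1

theorem det_conjTranspose_mul_LmT (m : ℕ) (hm : 1 ≤ m) (lam : ℂ) :
    ((LmT m lam)ᴴ * LmT m lam).det =
      ((∑ k ∈ Finset.range (m + 1), ‖lam‖ ^ (2 * k) : ℝ) : ℂ) ∧
    0 < (∑ k ∈ Finset.range (m + 1), ‖lam‖ ^ (2 * k) : ℝ) := by
  constructor
  · rw [mul_eq_Tm, det_Tm]
    push_cast
    refine Finset.sum_congr rfl fun k _ => ?_
    rw [pow_mul, ← Complex.ofReal_pow, Complex.sq_norm, Complex.normSq_eq_conj_mul_self]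
  · refine Finset.sum_pos' (fun k _ => by positivity) ⟨0, Finset.mem_range.2 (by omega), by simp⟩
end

section
/- Smallest singular value of L_m^T(λ) is uniformly bounded below: for every m ≥ 1 there exists c > 0 such that for all λ ∈ ℂ and all v ∈ ℂ^m, ‖L_m^T(λ) v‖ ≥ c ‖v‖. -/
open Matrix

/-- A coordinate of a vector in Euclidean space is bounded by the norm. -/
lemma euclid_coord_le {n : ℕ} (x : EuclideanSpace ℂ (Fin n)) (i : Fin n) : ‖x i‖ ≤ ‖x‖ := by
  have h : ‖x i‖ ^ 2 ≤ ∑ j : Fin n, ‖x j‖ ^ 2 :=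
    Finset.single_le_sum (fun j _ => sq_nonneg ‖x j‖) (Finset.mem_univ i)
  rw [EuclideanSpace.norm_eq]
  calc ‖x i‖ = Real.sqrt (‖x i‖ ^ 2) := (Real.sqrt_sq (norm_nonneg _)).symm
    _ ≤ _ := Real.sqrt_le_sqrt h

/-- The smallest singular value of `L_m^T(λ)` is bounded below uniformly in `λ`. -/
theorem LmT_uniform_lower_bound (m : ℕ) (hm : 1 ≤ m) :
    ∃ c : ℝ, 0 < c ∧ ∀ (lam : ℂ) (v : EuclideanSpace ℂ (Fin m)),
      c * ‖v‖ ≤ ‖Matrix.toEuclideanLin (LmT m lam) v‖ := by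
  have hmpos : (0 : ℝ) < m := by exact_mod_cast hm
  have hm0 : (m : ℝ) ≠ 0 := ne_of_gt hmpos
  refine ⟨((m : ℝ) * (m + 1))⁻¹, by positivity, ?_⟩
  intro lam v
  set w : EuclideanSpace ℂ (Fin (m + 1)) := Matrix.toEuclideanLin (LmT m lam) v with hwdef
  have hcoord : ∀ i : Fin (m + 1), w i = ∑ j : Fin m,
      (if (i : ℕ) = (j : ℕ) then lam else if (i : ℕ) = (j : ℕ) + 1 then 1 else 0) * v j := by
    intro i
    simp [hwdef, Matrix.toEuclideanLin_apply, Matrix.mulVec, dotProduct, LmT]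
  -- row formulas
  have row0 : w ⟨0, Nat.succ_pos m⟩ = lam * v ⟨0, hm⟩ := by
    rw [hcoord, Fintype.sum_eq_single (⟨0, hm⟩ : Fin m)]
    · simp
    · intro b hb
      have hb' : (b : ℕ) ≠ 0 := fun h => hb (Fin.ext h)
      have e1 : ¬ ((0 : ℕ) = (b : ℕ)) := by omega
      have e2 : ¬ ((0 : ℕ) = (b : ℕ) + 1) := by omega
      simp [e1, e2]
  have rowSucc : ∀ k, ∀ h : k + 1 < m,
      w ⟨k + 1, by omega⟩ = lam * v ⟨k + 1, h⟩ + v ⟨k, by omega⟩ := by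
    intro k h
    rw [hcoord]
    rw [Finset.sum_eq_add (⟨k + 1, h⟩ : Fin m) (⟨k, by omega⟩ : Fin m)
      (by intro hc; exact absurd (Fin.mk.inj_iff.mp hc) (by omega))
      ?_ (by intro hc; exact absurd (Finset.mem_univ _) hc)
      (by intro hc; exact absurd (Finset.mem_univ _) hc)]
    · have e1 : ((k : ℕ) + 1 = k + 1) := rfl
      have e2 : ¬ ((k : ℕ) + 1 = k) := by omega
      simp [e1, e2]
    · intro c _ hc
      have h1 : (c : ℕ) ≠ k + 1 := fun hh => hc.1 (Fin.ext hh)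
      have h2 : (c : ℕ) ≠ k := fun hh => hc.2 (Fin.ext hh)
      have e1 : ¬ ((k + 1 : ℕ) = (c : ℕ)) := by omega
      have e2 : ¬ ((k + 1 : ℕ) = (c : ℕ) + 1) := by omega
      simp [e1, e2, h2.symm]
  have rowLast : w ⟨m, lt_add_one m⟩ = v ⟨m - 1, by omega⟩ := by
    rw [hcoord, Fintype.sum_eq_single (⟨m - 1, by omega⟩ : Fin m)]
    · have e1 : ¬ ((m : ℕ) = m - 1) := by omega
      have e2 : (m : ℕ) = (m - 1) + 1 := by omega
      rw [if_neg e1, if_pos e2, one_mul]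
    · intro b hb
      have hb' : (b : ℕ) ≠ m - 1 := fun h => hb (Fin.ext h)
      have hbm : (b : ℕ) < m := b.isLt
      have e1 : ¬ ((m : ℕ) = (b : ℕ)) := by omega
      have e2 : ¬ ((m : ℕ) = (b : ℕ) + 1) := by omega
      simp [e1, e2]
  -- sums of coordinate norms of w
  set S : ℝ := ∑ i : Fin (m + 1), ‖w i‖ with hSdef
  have hS0 : 0 ≤ S := Finset.sum_nonneg fun _ _ => norm_nonneg _
  set w' : ℕ → ℝ := fun k => if h : k < m + 1 then ‖w ⟨k, h⟩‖ else 0 with hw'def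
  have hw'nn : ∀ k, 0 ≤ w' k := by
    intro k
    by_cases h : k ≤ m <;> simp [hw'def, h]
  have hw'eq : ∀ k (h : k < m + 1), w' k = ‖w ⟨k, h⟩‖ := by
    intro k h; simp [hw'def, Nat.lt_add_one_iff.mp h]
  have hfull : ∑ i ∈ Finset.range (m + 1), w' i = S := by
    rw [hSdef, ← Fin.sum_univ_eq_sum_range]
    exact Finset.sum_congr rfl fun i _ => by simp [hw'def, Nat.lt_add_one_iff.mp i.isLt]
  -- the key coordinatewise bound
  have key : ∀ k (hk : k < m), ‖v ⟨k, hk⟩‖ ≤ S := by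
    rcases le_or_gt 1 ‖lam‖ with hlam | hlam
    · -- |λ| ≥ 1 : forward substitution
      have up : ∀ k, ∀ hk : k < m, ‖v ⟨k, hk⟩‖ ≤ ∑ i ∈ Finset.range (k + 1), w' i := by
        intro k
        induction k with
        | zero =>
          intro hk
          rw [Finset.sum_range_one, hw'eq 0 (Nat.succ_pos m)]
          have h1 : ‖w ⟨0, Nat.succ_pos m⟩‖ = ‖lam‖ * ‖v ⟨0, hm⟩‖ := by
            rw [row0, norm_mul]
          have h2 : v ⟨0, hk⟩ = v ⟨0, hm⟩ := rfl
          rw [h2, h1]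
          nlinarith [norm_nonneg (v ⟨0, hm⟩)]
        | succ k ih =>
          intro hk
          have hk' : k < m := by omega
          have ihk := ih hk'
          have hrec := rowSucc k hk
          have heq : lam * v ⟨k + 1, hk⟩ = w ⟨k + 1, by omega⟩ - v ⟨k, hk'⟩ := by
            rw [hrec]; ring
          have hb : ‖v ⟨k + 1, hk⟩‖ ≤ ‖w ⟨k + 1, by omega⟩‖ + ‖v ⟨k, hk'⟩‖ := by
            have h3 : ‖lam‖ * ‖v ⟨k + 1, hk⟩‖ ≤ ‖w ⟨k + 1, by omega⟩‖ + ‖v ⟨k, hk'⟩‖ := by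
              calc ‖lam‖ * ‖v ⟨k + 1, hk⟩‖ = ‖lam * v ⟨k + 1, hk⟩‖ := (norm_mul _ _).symm
                _ = ‖w ⟨k + 1, by omega⟩ - v ⟨k, hk'⟩‖ := by rw [heq]
                _ ≤ _ := norm_sub_le _ _
            nlinarith [norm_nonneg (v ⟨k + 1, hk⟩)]
          rw [Finset.sum_range_succ, hw'eq (k + 1) (by omega)]
          linarith
      intro k hk
      calc ‖v ⟨k, hk⟩‖ ≤ ∑ i ∈ Finset.range (k + 1), w' i := up k hk
        _ ≤ ∑ i ∈ Finset.range (m + 1), w' i :=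
            Finset.sum_le_sum_of_subset_of_nonneg
              (Finset.range_subset_range.2 (by omega)) (fun i _ _ => hw'nn i)
        _ = S := hfull
    · -- |λ| < 1 : backward substitution
      have down : ∀ d, ∀ _ : d < m, ∀ k (hk : k < m), k = m - 1 - d →
          ‖v ⟨k, hk⟩‖ ≤ ∑ i ∈ Finset.range (d + 1), w' (m - i) := by
        intro d
        induction d with
        | zero =>
          intro _ k hk hkd
          rw [Finset.sum_range_one, Nat.sub_zero, hw'eq m (lt_add_one m), rowLast]
          have : k = m - 1 := by omega
          subst this
          exact le_refl _
        | succ d ih =>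
          intro hd k hk hkd
          have hd' : d < m := by omega
          have hklt : k + 1 < m := by omega
          have ihk := ih hd' (k + 1) hklt (by omega)
          have hrec := rowSucc k hklt
          have heq : v ⟨k, hk⟩ = w ⟨k + 1, by omega⟩ - lam * v ⟨k + 1, hklt⟩ := by
            have h2 : v ⟨k, hk⟩ = v ⟨k, by omega⟩ := rfl
            rw [h2, hrec]; ring
          have hb : ‖v ⟨k, hk⟩‖ ≤ ‖w ⟨k + 1, by omega⟩‖ + ‖v ⟨k + 1, hklt⟩‖ := by
            rw [heq]
            refine (norm_sub_le _ _).trans ?_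
            rw [norm_mul]
            nlinarith [norm_nonneg (v ⟨k + 1, hklt⟩)]
          rw [Finset.sum_range_succ]
          have hmd : m - (d + 1) = k + 1 := by omega
          rw [hmd, hw'eq (k + 1) (by omega)]
          linarith
      intro k hk
      have hd : m - 1 - k < m := by omega
      calc ‖v ⟨k, hk⟩‖ ≤ ∑ i ∈ Finset.range ((m - 1 - k) + 1), w' (m - i) :=
            down (m - 1 - k) hd k hk (by omega)
        _ ≤ ∑ i ∈ Finset.range (m + 1), w' (m - i) :=
            Finset.sum_le_sum_of_subset_of_nonneg
              (Finset.range_subset_range.2 (by omega)) (fun i _ _ => hw'nn _)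
        _ = ∑ i ∈ Finset.range (m + 1), w' i := by
            have := Finset.sum_range_reflect w' (m + 1)
            simpa using this
        _ = S := hfull
  -- assemble the final estimate
  have hSle : S ≤ ((m : ℝ) + 1) * ‖w‖ := by
    rw [hSdef]
    calc ∑ i : Fin (m + 1), ‖w i‖ ≤ ∑ _i : Fin (m + 1), ‖w‖ :=
          Finset.sum_le_sum fun i _ => euclid_coord_le w i
      _ = ((m : ℝ) + 1) * ‖w‖ := by
          rw [Finset.sum_const, Finset.card_univ, Fintype.card_fin, nsmul_eq_mul]
          push_cast; ring
  have hvS : ‖v‖ ≤ (m : ℝ) * S := by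
    have h1 : ‖v‖ ≤ Real.sqrt ((m : ℝ) * S ^ 2) := by
      rw [EuclideanSpace.norm_eq]
      apply Real.sqrt_le_sqrt
      calc ∑ k : Fin m, ‖v k‖ ^ 2 ≤ ∑ _k : Fin m, S ^ 2 := by
            refine Finset.sum_le_sum fun k _ => ?_
            have hk := key k.1 k.2
            rw [Fin.eta] at hk
            exact pow_le_pow_left₀ (norm_nonneg _) hk 2
        _ = (m : ℝ) * S ^ 2 := by
            rw [Finset.sum_const, Finset.card_univ, Fintype.card_fin, nsmul_eq_mul]
    calc ‖v‖ ≤ Real.sqrt ((m : ℝ) * S ^ 2) := h1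
      _ ≤ Real.sqrt (((m : ℝ) * S) ^ 2) := by
          apply Real.sqrt_le_sqrt
          have hm1 : (1 : ℝ) ≤ (m : ℝ) := by exact_mod_cast hm
          nlinarith [sq_nonneg S, hm1]
      _ = (m : ℝ) * S := Real.sqrt_sq (by positivity)
  have hfinal : ‖v‖ ≤ (m : ℝ) * (((m : ℝ) + 1) * ‖w‖) := by
    calc ‖v‖ ≤ (m : ℝ) * S := hvS
      _ ≤ (m : ℝ) * (((m : ℝ) + 1) * ‖w‖) := by nlinarith
  calc ((m : ℝ) * (m + 1))⁻¹ * ‖v‖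
      ≤ ((m : ℝ) * (m + 1))⁻¹ * ((m : ℝ) * (((m : ℝ) + 1) * ‖w‖)) := by
        apply mul_le_mul_of_nonneg_left hfinal (by positivity)
    _ = ‖w‖ := by field_simp
end
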